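/- Let X be a random vector in ℝ^k with E X = μ ≠ 0 and Cov X = I. Then E(((X−μ)ᵀμ)² − 2(X−μ)ᵀμ − μᵀμ)² = 0 if and only if (X−μ)ᵀμ takes a.s. only the two values 1 + √(1+‖μ‖²) and 1 − √(1+‖μ‖²), with P((X−μ)ᵀμ = 1+√(1+‖μ‖²)) = (1/2)(1 − 1/√(1+‖μ‖²)). -/

import Mathlib

open MeasureTheory
open scoped RealInnerProductSpace

lemma key_deg {Ω : Type*} [MeasurableSpace Ω] (P : Measure Ω) [IsProbabilityMeasure P]
    (Z : Ω → ℝ) (hZm : Measurable Z) (hZi : Integrable Z P)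
    (hEZ : ∫ ω, Z ω ∂P = 0) (m : ℝ) (hm : 0 ≤ m)
    (hint : Integrable (fun ω => (Z ω ^ 2 - 2 * Z ω - m) ^ 2) P) :
    (∫ ω, (Z ω ^ 2 - 2 * Z ω - m) ^ 2 ∂P) = 0 ↔
      ((∀ᵐ ω ∂P, Z ω = 1 + Real.sqrt (1 + m) ∨ Z ω = 1 - Real.sqrt (1 + m)) ∧
        (P {ω | Z ω = 1 + Real.sqrt (1 + m)}).toReal
          = (1 / 2) * (1 - 1 / Real.sqrt (1 + m))) := by
  set s : ℝ := Real.sqrt (1 + m) with hs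
  have hs2 : s ^ 2 = 1 + m := Real.sq_sqrt (by linarith)
  have hs1 : (1 : ℝ) ≤ s := by
    rw [show (1:ℝ) = Real.sqrt 1 by simp]
    exact Real.sqrt_le_sqrt (by linarith)
  have hs0 : (0:ℝ) < s := lt_of_lt_of_le one_pos hs1
  constructor
  · intro h0
    have hnn : 0 ≤ᵐ[P] fun ω => (Z ω ^ 2 - 2 * Z ω - m) ^ 2 :=
      Filter.Eventually.of_forall fun ω => sq_nonneg _
    have hae0 : (fun ω => (Z ω ^ 2 - 2 * Z ω - m) ^ 2) =ᵐ[P] 0 :=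
      (integral_eq_zero_iff_of_nonneg_ae hnn hint).mp h0
    have hab : ∀ᵐ ω ∂P, Z ω = 1 + s ∨ Z ω = 1 - s := by
      filter_upwards [hae0] with ω hω
      have hω' : (Z ω ^ 2 - 2 * Z ω - m) ^ 2 = 0 := hω
      have heq : Z ω ^ 2 - 2 * Z ω - m = 0 := by
        exact pow_eq_zero_iff (two_ne_zero) |>.mp hω'
      have h1 : (Z ω - (1 + s)) * (Z ω - (1 - s)) = 0 := by
        linear_combination heq - hs2
      rcases mul_eq_zero.mp h1 with h | h
      · left; linarith
      · right; linarith
    refine ⟨hab, ?_⟩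
    set A : Set Ω := {ω | Z ω = 1 + s} with hA
    set B : Set Ω := {ω | Z ω = 1 - s} with hB
    have hAm : MeasurableSet A := hZm (measurableSet_singleton (1 + s))
    have hBm : MeasurableSet B := hZm (measurableSet_singleton (1 - s))
    have hne : (1 : ℝ) + s ≠ 1 - s := by intro h; linarith
    have hdisj : Disjoint A B := by
      rw [Set.disjoint_left]
      intro ω hωA hωB
      exact hne (by rw [← hωA, ← hωB] <;> rfl)
    have hone : P (A ∪ B) = 1 := by
      have hcompl : P (A ∪ B)ᶜ = 0 := by
        rw [ae_iff] at hab
        convert hab using 2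
        ext ω; simp [hA, hB]

      have := prob_compl_eq_zero_iff (hAm.union hBm) |>.mp hcompl
      exact this
    have hsum : P A + P B = 1 := by
      rw [← measure_union hdisj hBm]; exact hone
    have hAfin : P A ≠ ⊤ := measure_ne_top _ _
    have hBfin : P B ≠ ⊤ := measure_ne_top _ _
    have hsumR : (P A).toReal + (P B).toReal = 1 := by
      rw [← ENNReal.toReal_add hAfin hBfin, hsum]; simp
    have hfg : Z =ᵐ[P]
        (A.indicator (fun _ => (1 + s)) + B.indicator (fun _ => (1 - s))) := by
      filter_upwards [hab] with ω hω
      rcases hω with h | h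
      · have hωA : ω ∈ A := h
        have hωB : ω ∉ B := by
          intro hωB
          exact hne (by rw [← h]; exact hωB)
        simp [Set.indicator_of_mem hωA, Set.indicator_of_notMem hωB, h]
      · have hωB : ω ∈ B := h
        have hωA : ω ∉ A := by
          intro hωA
          exact hne (by rw [← hωA]; exact h)
        simp [Set.indicator_of_mem hωB, Set.indicator_of_notMem hωA, h]
    have hEg : (0:ℝ) = (1 + s) * (P A).toReal + (1 - s) * (P B).toReal := by
      rw [← hEZ, integral_congr_ae hfg]
      simp only [Pi.add_apply]
      rw [
        integral_add ((integrable_const _).indicator hAm) ((integrable_const _).indicator hBm),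
        integral_indicator_const _ hAm, integral_indicator_const _ hBm]
      simp [mul_comm]
      rfl
    have : (P A).toReal = (1 / 2) * (1 - 1 / s) := by
      have hpB : (P B).toReal = 1 - (P A).toReal := by linarith
      rw [hpB] at hEg
      field_simp
      nlinarith [hEg]
    exact this
  · rintro ⟨hab, -⟩
    have hz : (fun ω => (Z ω ^ 2 - 2 * Z ω - m) ^ 2) =ᵐ[P] 0 := by
      filter_upwards [hab] with ω hω
      have heq : Z ω ^ 2 - 2 * Z ω - m = 0 := by
        rcases hω with h | h <;> rw [h] <;> linear_combination hs2
      show (Z ω ^ 2 - 2 * Z ω - m) ^ 2 = 0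
      rw [heq]; ring
    rw [integral_congr_ae hz]; simp


/-- Degeneracy for the non-central Hotelling statistic: for `X` in `ℝ^k` with mean
`μv ≠ 0` and identity covariance, writing `Z = (X−μv)ᵀμv`,
`E(Z² − 2Z − ‖μv‖²)² = 0` iff `Z` takes a.s. only the values `1 ± √(1+‖μv‖²)`, with
`P(Z = 1+√(1+‖μv‖²)) = (1/2)(1 − 1/√(1+‖μv‖²))`. -/
theorem stmt14 {Ω : Type*} [MeasurableSpace Ω] (P : Measure Ω) [IsProbabilityMeasure P]
    {k : ℕ} (hk : 2 ≤ k) (X : Ω → EuclideanSpace ℝ (Fin k))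
    (hXm : Measurable X) (hXint : Integrable X P)
    (μv : EuclideanSpace ℝ (Fin k)) (hμv : μv ≠ 0)
    (hmean : ∫ ω, X ω ∂P = μv)
    (hcovint : ∀ u v : EuclideanSpace ℝ (Fin k),
      Integrable (fun ω => ⟪X ω - μv, u⟫ * ⟪X ω - μv, v⟫) P)
    (hcov : ∀ u v : EuclideanSpace ℝ (Fin k),
      ∫ ω, ⟪X ω - μv, u⟫ * ⟪X ω - μv, v⟫ ∂P = ⟪u, v⟫)
    (hint4 : Integrable (fun ω =>
      (⟪X ω - μv, μv⟫ ^ 2 - 2 * ⟪X ω - μv, μv⟫ - ‖μv‖ ^ 2) ^ 2) P) :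
    (∫ ω, (⟪X ω - μv, μv⟫ ^ 2 - 2 * ⟪X ω - μv, μv⟫ - ‖μv‖ ^ 2) ^ 2 ∂P) = 0 ↔
      ((∀ᵐ ω ∂P, ⟪X ω - μv, μv⟫ = 1 + Real.sqrt (1 + ‖μv‖ ^ 2)
          ∨ ⟪X ω - μv, μv⟫ = 1 - Real.sqrt (1 + ‖μv‖ ^ 2)) ∧
        (P {ω | ⟪X ω - μv, μv⟫ = 1 + Real.sqrt (1 + ‖μv‖ ^ 2)}).toReal
          = (1 / 2) * (1 - 1 / Real.sqrt (1 + ‖μv‖ ^ 2))) := by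
  have hXc : Integrable (fun ω => X ω - μv) P := hXint.sub (integrable_const μv)
  have hIc : ∫ ω, (X ω - μv) ∂P = 0 := by
    rw [integral_sub hXint (integrable_const μv), hmean, integral_const]
    simp
  have hZm : Measurable (fun ω => ⟪X ω - μv, μv⟫) :=
    (hXm.sub measurable_const).inner measurable_const
  have he : (fun ω => ⟪X ω - μv, μv⟫) = fun ω => (innerSL ℝ μv) (X ω - μv) :=
    funext fun ω => real_inner_comm _ _
  have hZi : Integrable (fun ω => ⟪X ω - μv, μv⟫) P := by
    rw [he]; exact (innerSL ℝ μv).integrable_comp hXc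
  have hEZ : ∫ ω, ⟪X ω - μv, μv⟫ ∂P = 0 := by
    have h1 : ∫ ω, (innerSL ℝ μv) (X ω - μv) ∂P = (innerSL ℝ μv) (∫ ω, (X ω - μv) ∂P) :=
      ContinuousLinearMap.integral_comp_comm _ hXc
    rw [hIc, map_zero] at h1
    rw [he]; exact h1
  exact key_deg P (fun ω => ⟪X ω - μv, μv⟫) hZm hZi hEZ (‖μv‖ ^ 2) (by positivity) hint4
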